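/- For each k ∈ ℕ, the map γ_{2k} : S_{2k} → S_{2k+1} defined on Coxeter generators by γ_{2k}(s_i) = s_i for 1 ≤ i ≤ k−1, γ_{2k}(s_k) = s_k s_{k+1} s_k, and γ_{2k}(s_i) = s_{i+1} for k+1 ≤ i ≤ 2k−1, is a well-defined injective group homomorphism which intertwines the automorphisms: θ_{2k+1} ∘ γ_{2k} = γ_{2k} ∘ θ_{2k}. -/

import Mathlib

lemma swap_viaEmbedding {α β : Type*} [DecidableEq α] [DecidableEq β] (ι : α ↪ β) (a b : α) :
    (Equiv.swap a b).viaEmbedding ι = Equiv.swap (ι a) (ι b) := by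
  ext x
  by_cases hx : x ∈ Set.range ι
  · obtain ⟨y, rfl⟩ := hx
    rw [Equiv.Perm.viaEmbedding_apply]
    rcases eq_or_ne y a with rfl | ha
    · simp
    rcases eq_or_ne y b with rfl | hb
    · simp
    · rw [Equiv.swap_apply_of_ne_of_ne ha hb,
        Equiv.swap_apply_of_ne_of_ne (fun h => ha (ι.injective h)) (fun h => hb (ι.injective h))]
  · rw [Equiv.Perm.viaEmbedding_apply_of_notMem _ _ _ hx,
      Equiv.swap_apply_of_ne_of_ne (fun h => hx ⟨a, h.symm⟩) (fun h => hx ⟨b, h.symm⟩)]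

lemma mclosure_adjacent_swaps (m : ℕ) :
    Submonoid.closure {σ : Equiv.Perm (Fin m) |
      ∃ (j : ℕ) (h : j + 1 < m), σ = Equiv.swap ⟨j, by omega⟩ ⟨j + 1, h⟩} = ⊤ := by
  cases m with
  | zero =>
    ext σ
    simp [Subsingleton.elim σ 1, Submonoid.one_mem]
  | succ n =>
    rw [← Equiv.Perm.mclosure_swap_castSucc_succ n]
    congr 1
    ext σ
    constructor
    · rintro ⟨j, h, rfl⟩
      exact ⟨⟨j, by omega⟩, rfl⟩
    · rintro ⟨i, rfl⟩
      exact ⟨i, by omega, rfl⟩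

lemma swap_congr {α : Type*} [DecidableEq α] {a a' b b' : α} (h1 : a = a') (h2 : b = b') :
    Equiv.swap a b = Equiv.swap a' b' := by rw [h1, h2]


lemma swap_three_aux (k : ℕ) (hk : 0 < k) :
    Equiv.swap (⟨k - 1, by omega⟩ : Fin (2 * k + 1)) ⟨k + 1, by omega⟩ =
      Equiv.swap (⟨k - 1, by omega⟩ : Fin (2 * k + 1)) ⟨k, by omega⟩ *
      Equiv.swap (⟨k, by omega⟩ : Fin (2 * k + 1)) ⟨k + 1, by omega⟩ *
      Equiv.swap (⟨k - 1, by omega⟩ : Fin (2 * k + 1)) ⟨k, by omega⟩ := by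
  have h2 : (⟨k + 1, by omega⟩ : Fin (2 * k + 1)) ≠ ⟨k, by omega⟩ := by
    simp only [ne_eq, Fin.mk.injEq]; omega
  have h3 : (⟨k + 1, by omega⟩ : Fin (2 * k + 1)) ≠ ⟨k - 1, by omega⟩ := by
    simp only [ne_eq, Fin.mk.injEq]; omega
  rw [Equiv.swap_comm (⟨k - 1, by omega⟩ : Fin (2 * k + 1)) ⟨k, by omega⟩,
    Equiv.swap_comm (⟨k, by omega⟩ : Fin (2 * k + 1)) ⟨k + 1, by omega⟩,
    Equiv.swap_mul_swap_mul_swap h2 h3, Equiv.swap_comm]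

/-- For each `k ≥ 1` there is an injective group homomorphism `γ : S_{2k} → S_{2k+1}`
with `γ(s_i) = s_i` for `1 ≤ i ≤ k-1`, `γ(s_k) = s_k s_{k+1} s_k`, and
`γ(s_i) = s_{i+1}` for `k+1 ≤ i ≤ 2k-1` (Coxeter generators `s_i = (i, i+1)`,
0-indexed below), which intertwines the flip automorphisms:
`θ_{2k+1} ∘ γ = γ ∘ θ_{2k}`. -/
theorem equivariant_embedding_even_into_odd (k : ℕ) (hk : 1 ≤ k) :
    ∃ γ : Equiv.Perm (Fin (2 * k)) →* Equiv.Perm (Fin (2 * k + 1)),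
      Function.Injective γ ∧
      (∀ (i : ℕ) (h1 : 1 ≤ i) (h2 : i ≤ k - 1),
        γ (Equiv.swap (⟨i - 1, by omega⟩ : Fin (2 * k)) (⟨i, by omega⟩ : Fin (2 * k))) =
          Equiv.swap (⟨i - 1, by omega⟩ : Fin (2 * k + 1)) (⟨i, by omega⟩ : Fin (2 * k + 1))) ∧
      (γ (Equiv.swap (⟨k - 1, by omega⟩ : Fin (2 * k)) (⟨k, by omega⟩ : Fin (2 * k))) =
        Equiv.swap (⟨k - 1, by omega⟩ : Fin (2 * k + 1)) (⟨k, by omega⟩ : Fin (2 * k + 1)) *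
          Equiv.swap (⟨k, by omega⟩ : Fin (2 * k + 1)) (⟨k + 1, by omega⟩ : Fin (2 * k + 1)) *
          Equiv.swap (⟨k - 1, by omega⟩ : Fin (2 * k + 1)) (⟨k, by omega⟩ : Fin (2 * k + 1))) ∧
      (∀ (i : ℕ) (h1 : k + 1 ≤ i) (h2 : i ≤ 2 * k - 1),
        γ (Equiv.swap (⟨i - 1, by omega⟩ : Fin (2 * k)) (⟨i, by omega⟩ : Fin (2 * k))) =
          Equiv.swap (⟨i, by omega⟩ : Fin (2 * k + 1)) (⟨i + 1, by omega⟩ : Fin (2 * k + 1))) ∧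
      (∀ (θ₁ : Equiv.Perm (Fin (2 * k)) ≃* Equiv.Perm (Fin (2 * k)))
          (θ₂ : Equiv.Perm (Fin (2 * k + 1)) ≃* Equiv.Perm (Fin (2 * k + 1))),
        (∀ (j : ℕ) (hj : j + 1 < 2 * k),
          θ₁ (Equiv.swap (⟨j, by omega⟩ : Fin (2 * k)) (⟨j + 1, hj⟩ : Fin (2 * k))) =
            Equiv.swap (⟨2 * k - 2 - j, by omega⟩ : Fin (2 * k))
              (⟨2 * k - 1 - j, by omega⟩ : Fin (2 * k))) →
        (∀ (j : ℕ) (hj : j + 1 < 2 * k + 1),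
          θ₂ (Equiv.swap (⟨j, by omega⟩ : Fin (2 * k + 1)) (⟨j + 1, hj⟩ : Fin (2 * k + 1))) =
            Equiv.swap (⟨2 * k - 1 - j, by omega⟩ : Fin (2 * k + 1))
              (⟨2 * k - j, by omega⟩ : Fin (2 * k + 1))) →
        ∀ σ, γ (θ₁ σ) = θ₂ (γ σ)) := by
  have finj : Function.Injective (fun i : Fin (2 * k) =>
      if (i : ℕ) < k then (⟨(i : ℕ), by omega⟩ : Fin (2 * k + 1)) else ⟨(i : ℕ) + 1, by omega⟩) := by
    intro a b h
    simp only at h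
    split_ifs at h <;> simp_all [Fin.ext_iff] <;> omega
  set ι : Fin (2 * k) ↪ Fin (2 * k + 1) := ⟨_, finj⟩ with hι
  have key : ∀ a b : Fin (2 * k),
      Equiv.Perm.viaEmbeddingHom ι (Equiv.swap a b) = Equiv.swap (ι a) (ι b) := fun a b => by
    rw [Equiv.Perm.viaEmbeddingHom_apply, swap_viaEmbedding]
  have key2 : ∀ (a b a' b' : ℕ) (ha : a < 2 * k) (hb : b < 2 * k)
      (ha' : a' < 2 * k + 1) (hb' : b' < 2 * k + 1),
      ((a < k ∧ a' = a) ∨ (k ≤ a ∧ a' = a + 1)) → ((b < k ∧ b' = b) ∨ (k ≤ b ∧ b' = b + 1)) →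
      Equiv.Perm.viaEmbeddingHom ι (Equiv.swap ⟨a, ha⟩ ⟨b, hb⟩) =
        Equiv.swap ⟨a', ha'⟩ ⟨b', hb'⟩ := by
    intro a b a' b' ha hb ha' hb' h1 h2
    rw [key]
    apply swap_congr <;>
      · apply Fin.ext
        simp only [hι, Function.Embedding.coeFn_mk]
        split_ifs <;> simp <;> omega
  refine ⟨Equiv.Perm.viaEmbeddingHom ι, Equiv.Perm.viaEmbeddingHom_injective ι, ?_, ?_, ?_, ?_⟩
  · intro i h1 h2
    exact key2 (i - 1) i (i - 1) i (by omega) (by omega) (by omega) (by omega)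
      (Or.inl ⟨by omega, rfl⟩) (Or.inl ⟨by omega, rfl⟩)
  · rw [key2 (k - 1) k (k - 1) (k + 1) (by omega) (by omega) (by omega) (by omega)
      (Or.inl ⟨by omega, rfl⟩) (Or.inr ⟨by omega, rfl⟩)]
    exact swap_three_aux k hk
  · intro i h1 h2
    exact key2 (i - 1) i i (i + 1) (by omega) (by omega) (by omega) (by omega)
      (Or.inr ⟨by omega, by omega⟩) (Or.inr ⟨by omega, rfl⟩)
  · intro θ₁ θ₂ hθ₁ hθ₂ σ
    have hσ : σ ∈ Submonoid.closure {τ : Equiv.Perm (Fin (2 * k)) |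
        ∃ (j : ℕ) (h : j + 1 < 2 * k), τ = Equiv.swap ⟨j, by omega⟩ ⟨j + 1, h⟩} := by
      rw [mclosure_adjacent_swaps]; trivial
    induction hσ using Submonoid.closure_induction with
    | one => simp
    | mul x y hx hy ihx ihy => simp [map_mul, ihx, ihy]
    | mem x hx =>
      obtain ⟨j, hj, rfl⟩ := hx
      rw [hθ₁ j hj]
      rcases lt_trichotomy (j + 1) k with hlt | heq | hgt
      · rw [key2 (2 * k - 2 - j) (2 * k - 1 - j) (2 * k - 1 - j) (2 * k - j)
          (by omega) (by omega) (by omega) (by omega)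
          (Or.inr ⟨by omega, by omega⟩) (Or.inr ⟨by omega, by omega⟩),
          key2 j (j + 1) j (j + 1) (by omega) (by omega) (by omega) (by omega)
          (Or.inl ⟨by omega, rfl⟩) (Or.inl ⟨by omega, rfl⟩),
          hθ₂ j (by omega)]
      · -- j = k - 1
        rw [key2 (2 * k - 2 - j) (2 * k - 1 - j) (k - 1) (k + 1)
          (by omega) (by omega) (by omega) (by omega)
          (Or.inl ⟨by omega, by omega⟩) (Or.inr ⟨by omega, by omega⟩),
          key2 j (j + 1) (k - 1) (k + 1) (by omega) (by omega) (by omega) (by omega)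
          (Or.inl ⟨by omega, by omega⟩) (Or.inr ⟨by omega, by omega⟩)]
        have hxy : (⟨k - 1, by omega⟩ : Fin (2 * k + 1)) ≠ ⟨k, by omega⟩ := by
          simp only [ne_eq, Fin.mk.injEq]; omega
        have hxz : (⟨k - 1, by omega⟩ : Fin (2 * k + 1)) ≠ ⟨k + 1, by omega⟩ := by
          simp only [ne_eq, Fin.mk.injEq]; omega
        have emid : Equiv.swap (⟨k - 1, by omega⟩ : Fin (2 * k + 1)) ⟨k - 1 + 1, by omega⟩ =
            Equiv.swap (⟨k - 1, by omega⟩ : Fin (2 * k + 1)) ⟨k, by omega⟩ :=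
          swap_congr rfl ((by simp only [Fin.mk.injEq]; omega))
        have eA : Equiv.swap (⟨2 * k - 1 - k, by omega⟩ : Fin (2 * k + 1)) ⟨2 * k - k, by omega⟩ =
            Equiv.swap (⟨k - 1, by omega⟩ : Fin (2 * k + 1)) ⟨k, by omega⟩ :=
          swap_congr ((by simp only [Fin.mk.injEq]; omega)) ((by simp only [Fin.mk.injEq]; omega))
        have eB : Equiv.swap (⟨2 * k - 1 - (k - 1), by omega⟩ : Fin (2 * k + 1))
              ⟨2 * k - (k - 1), by omega⟩ =
            Equiv.swap (⟨k, by omega⟩ : Fin (2 * k + 1)) ⟨k + 1, by omega⟩ :=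
          swap_congr ((by simp only [Fin.mk.injEq]; omega)) ((by simp only [Fin.mk.injEq]; omega))
        conv_rhs => rw [Equiv.swap_comm, ← Equiv.swap_mul_swap_mul_swap hxy hxz]
        rw [map_mul, map_mul, hθ₂ k (by omega), ← emid, hθ₂ (k - 1) (by omega), eA, eB]
        exact swap_three_aux k hk
      · rw [key2 (2 * k - 2 - j) (2 * k - 1 - j) (2 * k - 2 - j) (2 * k - 1 - j)
          (by omega) (by omega) (by omega) (by omega)
          (Or.inl ⟨by omega, rfl⟩) (Or.inl ⟨by omega, rfl⟩),
          key2 j (j + 1) (j + 1) (j + 1 + 1) (by omega) (by omega) (by omega) (by omega)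
          (Or.inr ⟨by omega, rfl⟩) (Or.inr ⟨by omega, rfl⟩),
          hθ₂ (j + 1) (by omega)]
        apply swap_congr <;> · apply Fin.ext; simp; omega
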